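/- Let F be a field with char F ≠ 2 and char F ≠ 3, and let · be a bilinear multiplication on F × F that is not identically zero, is endo-commutative ((x·x)·(y·y) = (x·y)·(x·y) for all x, y) and is curled (for every x there exists λ ∈ F with x·x = λ • x). Then (F × F, ·) is isomorphic to exactly one of the following algebras, given by their matrices of structure constants: ((α1, 0, 0, 0), (0, 2α1−1, 1−α1, 0)) for some α1 ∈ F; or ((1/3, 0, 0, 0), (0, 2/3, −1/3, 0)). Here 'exactly one' means in addition that no two distinct algebras of this list (in particular for distinct values of α1) are isomorphic to each other. -/

import Mathlib

/-- The bilinear multiplication on `F × F` determined by the matrix of structure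
constants `((a1, a2, a3, a4), (b1, b2, b3, b4))`. -/
def scMul {F : Type*} [Field F] (a1 a2 a3 a4 b1 b2 b3 b4 : F) (x y : F × F) : F × F :=
  (a1 * x.1 * y.1 + a2 * x.1 * y.2 + a3 * x.2 * y.1 + a4 * x.2 * y.2,
   b1 * x.1 * y.1 + b2 * x.1 * y.2 + b3 * x.2 * y.1 + b4 * x.2 * y.2)

/-- A multiplication `m` on `F × F` is endo-commutative if `(x·x)·(y·y) = (x·y)·(x·y)`. -/
def IsEndoCommutative {F : Type*} [Field F] (m : F × F → F × F → F × F) : Prop :=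
  ∀ x y : F × F, m (m x x) (m y y) = m (m x y) (m x y)

/-- A multiplication `m` on `F × F` is curled if every square `x·x` is a scalar
multiple of `x`. -/
def IsCurled {F : Type*} [Field F] (m : F × F → F × F → F × F) : Prop :=
  ∀ x : F × F, ∃ lam : F, m x x = lam • x

/-- `m` is bilinear (linear in each argument). -/
def IsBilinearMul {F : Type*} [Field F] (m : F × F → F × F → F × F) : Prop :=
  (∀ (a : F) (x x' y : F × F), m (a • x + x') y = a • m x y + m x' y) ∧
  (∀ (a : F) (x y y' : F × F), m x (a • y + y') = a • m x y + m x y')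

/-- Two multiplications on `F × F` are isomorphic if some `F`-linear
equivalence `g` of `F × F` satisfies `g (x·y) = g x ∘ g y`. -/
def AlgIso {F : Type*} [Field F] (m₁ m₂ : F × F → F × F → F × F) : Prop :=
  ∃ g : (F × F) ≃ₗ[F] F × F, ∀ x y, g (m₁ x y) = m₂ (g x) (g y)

/-- The list of endo-commutative curled algebras (char F ≠ 2, 3):
`some a1` is `A₃(a1, 0, 2a1 - 1)` and `none` is `A₇(1/3, 0)`. -/
def ecCurledFamily {F : Type*} [Field F] : Option F → (F × F → F × F → F × F)
  | some a1 => scMul a1 0 0 0 0 (2 * a1 - 1) (1 - a1) 0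
  | none => scMul (1 / 3) 0 0 0 0 (2 / 3) (-(1 / 3)) 0

section Aux

variable {F : Type*} [Field F]

lemma algIso_symm {m₁ m₂ : F × F → F × F → F × F} (h : AlgIso m₁ m₂) : AlgIso m₂ m₁ := by
  obtain ⟨g, hg⟩ := h
  refine ⟨g.symm, fun x y => ?_⟩
  have h2 := hg (g.symm x) (g.symm y)
  rw [g.apply_symm_apply, g.apply_symm_apply] at h2
  rw [← h2, g.symm_apply_apply]

lemma algIso_trans {m₁ m₂ m₃ : F × F → F × F → F × F} (h : AlgIso m₁ m₂)
    (h' : AlgIso m₂ m₃) : AlgIso m₁ m₃ := by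
  obtain ⟨g, hg⟩ := h
  obtain ⟨k, hk⟩ := h'
  exact ⟨g.trans k, fun x y => by simp only [LinearEquiv.trans_apply, hg, hk]⟩

/-- An explicit linear equivalence of `F × F` from an invertible `2 × 2` matrix. -/
def gl2 (p q r s : F) (h : p * s - q * r ≠ 0) : (F × F) ≃ₗ[F] F × F where
  toFun x := (p * x.1 + q * x.2, r * x.1 + s * x.2)
  invFun y := ((s * y.1 - q * y.2) / (p * s - q * r), (p * y.2 - r * y.1) / (p * s - q * r))
  map_add' x y := by ext <;> simp <;> ring
  map_smul' c x := by ext <;> simp <;> ring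
  left_inv x := by ext <;> (dsimp only; rw [div_eq_iff h]; ring)
  right_inv y := by ext <;> (dsimp only; rw [mul_div_assoc', mul_div_assoc', ← add_div, div_eq_iff h]; ring)

@[simp] lemma gl2_apply (p q r s : F) (h : p * s - q * r ≠ 0) (x : F × F) :
    gl2 p q r s h x = (p * x.1 + q * x.2, r * x.1 + s * x.2) := rfl

/-- The key transformation lemma: a curled-form algebra, written via the linear
functional `φ = (a1, a2 + a3)` and vector `w = ((a2-a3)/2, (2b2-a1)/2)`, maps
isomorphically onto another one when `φ` and `w` transform correctly. -/
lemma key_iso (h2F : (2:F) ≠ 0) (a1 a2 a3 b2 A1 A2 A3 B2 B3 B4 p q r s : F)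
    (hB3 : B3 = A1 - B2) (hB4 : B4 = A2 + A3)
    (hdet : p * s - q * r ≠ 0)
    (hf1 : A1 * p + (A2 + A3) * r = a1)
    (hf2 : A1 * q + (A2 + A3) * s = a2 + a3)
    (hw1 : p * (a2 - a3) + q * (2 * b2 - a1) = (p * s - q * r) * (A2 - A3))
    (hw2 : r * (a2 - a3) + s * (2 * b2 - a1) = (p * s - q * r) * (2 * B2 - A1)) :
    AlgIso (scMul a1 a2 a3 0 0 b2 (a1 - b2) (a2 + a3))
      (scMul A1 A2 A3 0 0 B2 B3 B4) := by
  subst hB3 hB4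
  refine ⟨gl2 p q r s hdet, fun x y => ?_⟩
  simp only [gl2_apply, scMul, Prod.mk.injEq]
  constructor
  · apply mul_left_cancel₀ h2F
    linear_combination (-(x.1 * hf1 + x.2 * hf2) * (p * y.1 + q * y.2)
      - (y.1 * hf1 + y.2 * hf2) * (p * x.1 + q * x.2)) + (x.1 * y.2 - x.2 * y.1) * hw1
  · apply mul_left_cancel₀ h2F
    linear_combination (-(x.1 * hf1 + x.2 * hf2) * (r * y.1 + s * y.2)
      - (y.1 * hf1 + y.2 * hf2) * (r * x.1 + s * x.2)) + (x.1 * y.2 - x.2 * y.1) * hw2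

/-- Distinct members of the family are non-isomorphic. -/
lemma famInj (h3F : (3:F) ≠ 0) {i j : Option F}
    (hiso : AlgIso (ecCurledFamily i) (ecCurledFamily j)) : i = j := by
  obtain ⟨g, hg⟩ := hiso
  obtain ⟨p, r, hpr⟩ : ∃ u v, g (1,0) = (u, v) := ⟨_, _, rfl⟩
  obtain ⟨q, s, hqs⟩ : ∃ u v, g (0,1) = (u, v) := ⟨_, _, rfl⟩
  obtain ⟨p2, r2, hpr2⟩ : ∃ u v, g.symm (1,0) = (u, v) := ⟨_, _, rfl⟩
  obtain ⟨q2, s2, hqs2⟩ : ∃ u v, g.symm (0,1) = (u, v) := ⟨_, _, rfl⟩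
  have gapp : ∀ u : F × F, g u = (u.1 * p + u.2 * q, u.1 * r + u.2 * s) := by
    intro u
    have hu : u = u.1 • ((1:F),(0:F)) + u.2 • ((0:F),(1:F)) := by ext <;> simp
    conv_lhs => rw [hu]
    rw [map_add, map_smul, map_smul, hpr, hqs]
    ext <;> simp [mul_comm]
  have gsapp : ∀ u : F × F, g.symm u = (u.1 * p2 + u.2 * q2, u.1 * r2 + u.2 * s2) := by
    intro u
    have hu : u = u.1 • ((1:F),(0:F)) + u.2 • ((0:F),(1:F)) := by ext <;> simp
    conv_lhs => rw [hu]
    rw [map_add, map_smul, map_smul, hpr2, hqs2]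
    ext <;> simp [mul_comm]
  have hA := g.symm_apply_apply (1,0)
  rw [hpr, gsapp] at hA
  obtain ⟨hA1, hA2⟩ := Prod.mk.injEq .. ▸ hA
  have hB := g.symm_apply_apply (0,1)
  rw [hqs, gsapp] at hB
  obtain ⟨hB1, hB2⟩ := Prod.mk.injEq .. ▸ hB
  have hdet : p * s - q * r ≠ 0 := by
    intro h0
    have hkey : (p * s - q * r) * (p2 * s2 - q2 * r2) = 1 := by
      linear_combination hA1 + hB2 + (p * p2 + r * q2 - 1) * hB2 - (p * r2 + r * s2) * hB1
    rw [h0, zero_mul] at hkey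
    exact zero_ne_one hkey
  have E11 := hg (1,0) (1,0)
  have E12 := hg (1,0) (0,1)
  have E22 := hg (0,1) (0,1)
  rcases i with _ | c <;> rcases j with _ | c'
  · rfl
  · -- none → some c'
    exfalso
    simp only [ecCurledFamily, scMul, gapp, Prod.mk.injEq] at E11 E12 E22
    obtain ⟨e11a, e11b⟩ := E11
    obtain ⟨e12a, e12b⟩ := E12
    obtain ⟨e22a, e22b⟩ := E22
    by_cases hc0 : c' = 0
    · subst hc0
      have hp : p = 0 := by
        have h : (1/3 : F) * p = (1/3 : F) * 0 := by linear_combination e11a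
        exact mul_left_cancel₀ (one_div_ne_zero h3F) h
      have hr : r = 0 := by
        have h : (1/3 : F) * r = (1/3 : F) * 0 := by linear_combination e11b
        exact mul_left_cancel₀ (one_div_ne_zero h3F) h
      exact hdet (by rw [hp, hr]; ring)
    · have hq : q = 0 := by
        have h : c' * (q * q) = 0 := by linear_combination -e22a
        exact mul_self_eq_zero.mp ((mul_eq_zero.mp h).resolve_left hc0)
      have hp : p ≠ 0 := fun h => hdet (by rw [h, hq]; ring)
      have hs : s ≠ 0 := fun h => hdet (by rw [h, hq]; ring)
      have h1' : (1/3 : F) = c' * p := by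
        apply mul_right_cancel₀ hp
        linear_combination e11a
      have h6' : (2/3 : F) = (2 * c' - 1) * p := by
        apply mul_right_cancel₀ hs
        linear_combination e12b + ((1 - c') * r) * hq
      exact hp (by linear_combination h6' - 2 * h1')
  · -- some c → none
    exfalso
    simp only [ecCurledFamily, scMul, gapp, Prod.mk.injEq] at E11 E12 E22
    obtain ⟨e11a, e11b⟩ := E11
    obtain ⟨e12a, e12b⟩ := E12
    obtain ⟨e22a, e22b⟩ := E22
    have hq : q = 0 := by
      have h : (1/3 : F) * (q * q) = 0 := by linear_combination -e22a
      exact mul_self_eq_zero.mp ((mul_eq_zero.mp h).resolve_left (one_div_ne_zero h3F))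
    have hp : p ≠ 0 := fun h => hdet (by rw [h, hq]; ring)
    have hs : s ≠ 0 := fun h => hdet (by rw [h, hq]; ring)
    have h1' : c = (1/3 : F) * p := by
      apply mul_right_cancel₀ hp
      linear_combination e11a
    have h6' : 2 * c - 1 = (2/3 : F) * p := by
      apply mul_right_cancel₀ hs
      linear_combination e12b - ((1/3 : F) * r) * hq
    exact one_ne_zero (α := F) (by linear_combination 2 * h1' - h6')
  · -- some c → some c'
    simp only [ecCurledFamily, scMul, gapp, Prod.mk.injEq] at E11 E12 E22
    obtain ⟨e11a, e11b⟩ := E11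
    obtain ⟨e12a, e12b⟩ := E12
    obtain ⟨e22a, e22b⟩ := E22
    by_cases hc0 : c' = 0
    · subst hc0
      by_cases hc : c = 0
      · rw [hc]
      · exfalso
        have hp : p = 0 := by
          have h : c * p = 0 := by linear_combination e11a
          exact (mul_eq_zero.mp h).resolve_left hc
        have hr : r = 0 := by
          have h : c * r = 0 := by linear_combination e11b
          exact (mul_eq_zero.mp h).resolve_left hc
        exact hdet (by rw [hp, hr]; ring)
    · have hq : q = 0 := by
        have h : c' * (q * q) = 0 := by linear_combination -e22a
        exact mul_self_eq_zero.mp ((mul_eq_zero.mp h).resolve_left hc0)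
      have hp : p ≠ 0 := fun h => hdet (by rw [h, hq]; ring)
      have hs : s ≠ 0 := fun h => hdet (by rw [h, hq]; ring)
      have h1' : c = c' * p := by
        apply mul_right_cancel₀ hp
        linear_combination e11a
      have h6' : 2 * c - 1 = (2 * c' - 1) * p := by
        apply mul_right_cancel₀ hs
        linear_combination e12b + ((1 - c') * r) * hq
      have : c = c' := by linear_combination c' * h6' - (2 * c' - 1) * h1'
      rw [this]

end Aux

/-- any nonzero bilinear endo-commutative curled multiplication on
`F × F` (char F ≠ 2, 3) is isomorphic to exactly one member of `ecCurledFamily`,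
and the members of `ecCurledFamily` are pairwise non-isomorphic. -/
theorem stmt_16 {F : Type*} [Field F] (h2 : ringChar F ≠ 2) (h3 : ringChar F ≠ 3)
    (m : F × F → F × F → F × F) (hbil : IsBilinearMul m)
    (hnz : ¬ ∀ x y, m x y = 0)
    (hec : ∀ x y : F × F, m (m x x) (m y y) = m (m x y) (m x y))
    (hcur : IsCurled m) :
    (∃! i : Option F, AlgIso m (ecCurledFamily i)) ∧
      ∀ i j : Option F, i ≠ j → ¬ AlgIso (ecCurledFamily i) (ecCurledFamily j) := by
  classical
  have h2F : (2:F) ≠ 0 := by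
    intro h
    have hd : ringChar F ∣ 2 :=
      (@CharP.cast_eq_zero_iff F _ (ringChar F) (ringChar.charP F) 2).mp (by exact_mod_cast h)
    rcases (Nat.prime_two.eq_one_or_self_of_dvd _ hd) with h' | h'
    · exact CharP.ringChar_ne_one h'
    · exact h2 h'
  have h3F : (3:F) ≠ 0 := by
    intro h
    have hd : ringChar F ∣ 3 :=
      (@CharP.cast_eq_zero_iff F _ (ringChar F) (ringChar.charP F) 3).mp (by exact_mod_cast h)
    rcases (Nat.prime_three.eq_one_or_self_of_dvd _ hd) with h' | h'
    · exact CharP.ringChar_ne_one h'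
    · exact h3 h'
  obtain ⟨hL, hR⟩ := hbil
  have hz1 : ∀ y, m 0 y = 0 := by
    intro y
    have h := hL 1 0 0 y
    simp only [one_smul, add_zero] at h
    exact (left_eq_add.mp h)
  have hz2 : ∀ x, m x 0 = 0 := by
    intro x
    have h := hR 1 x 0 0
    simp only [one_smul, add_zero] at h
    exact (left_eq_add.mp h)
  have expandL : ∀ u y : F × F, m u y = u.1 • m (1,0) y + u.2 • m (0,1) y := by
    intro u y
    have h2' : m (u.2 • ((0:F),(1:F))) y = u.2 • m (0,1) y := by
      have h := hL u.2 (0,1) 0 y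
      rw [add_zero, hz1 y, add_zero] at h
      exact h
    have h1 := hL u.1 (1,0) (u.2 • ((0:F),(1:F))) y
    rw [h2'] at h1
    have hu : u.1 • ((1:F),(0:F)) + u.2 • ((0:F),(1:F)) = u := by ext <;> simp
    rw [hu] at h1
    exact h1
  have expandR : ∀ x v : F × F, m x v = v.1 • m x (1,0) + v.2 • m x (0,1) := by
    intro x v
    have h2' : m x (v.2 • ((0:F),(1:F))) = v.2 • m x (0,1) := by
      have h := hR v.2 x (0,1) 0
      rw [add_zero, hz2 x, add_zero] at h
      exact h
    have h1 := hR v.1 x (1,0) (v.2 • ((0:F),(1:F)))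
    rw [h2'] at h1
    have hu : v.1 • ((1:F),(0:F)) + v.2 • ((0:F),(1:F)) = v := by ext <;> simp
    rw [hu] at h1
    exact h1
  obtain ⟨a1, b1, h11⟩ : ∃ u v, m (1,0) (1,0) = (u, v) := ⟨_, _, rfl⟩
  obtain ⟨a2, b2, h12⟩ : ∃ u v, m (1,0) (0,1) = (u, v) := ⟨_, _, rfl⟩
  obtain ⟨a3, b3, h21⟩ : ∃ u v, m (0,1) (1,0) = (u, v) := ⟨_, _, rfl⟩
  obtain ⟨a4, b4, h22⟩ : ∃ u v, m (0,1) (0,1) = (u, v) := ⟨_, _, rfl⟩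
  have hrep : ∀ x y, m x y = scMul a1 a2 a3 a4 b1 b2 b3 b4 x y := by
    intro x y
    rw [expandL x y, expandR (1,0) y, expandR (0,1) y, h11, h12, h21, h22]
    ext <;> (simp [scMul]; ring)
  -- curled constraints
  have hb1 : b1 = 0 := by
    obtain ⟨l, hl⟩ := hcur (1,0)
    rw [h11] at hl
    have := congrArg Prod.snd hl
    simpa using this
  have ha4 : a4 = 0 := by
    obtain ⟨l, hl⟩ := hcur (0,1)
    rw [h22] at hl
    have := congrArg Prod.fst hl
    simpa using this
  subst hb1
  subst ha4
  obtain ⟨l3, hl3⟩ := hcur (1,1)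
  rw [hrep] at hl3
  have e3a := congrArg Prod.fst hl3
  have e3b := congrArg Prod.snd hl3
  simp only [scMul] at e3a e3b
  obtain ⟨l4, hl4⟩ := hcur (1,2)
  rw [hrep] at hl4
  have e4a := congrArg Prod.fst hl4
  have e4b := congrArg Prod.snd hl4
  simp only [scMul] at e4a e4b
  simp only [Prod.smul_mk, smul_eq_mul] at e3a e3b e4a e4b
  have hb4 : b4 = a2 + a3 := by
    apply mul_left_cancel₀ h2F
    linear_combination e4b - 2 * e4a - 2 * e3b + 2 * e3a
  subst hb4
  have hb3 : b3 = a1 - b2 := by linear_combination e3b - e3a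
  subst hb3
  -- endo-commutativity constraints
  have hecs : ∀ x y : F × F,
      scMul a1 a2 a3 0 0 b2 (a1-b2) (a2+a3)
        (scMul a1 a2 a3 0 0 b2 (a1-b2) (a2+a3) x x)
        (scMul a1 a2 a3 0 0 b2 (a1-b2) (a2+a3) y y)
      = scMul a1 a2 a3 0 0 b2 (a1-b2) (a2+a3)
        (scMul a1 a2 a3 0 0 b2 (a1-b2) (a2+a3) x y)
        (scMul a1 a2 a3 0 0 b2 (a1-b2) (a2+a3) x y) := by
    intro x y
    simp only [← hrep]
    exact hec x y
  have hI1 := hecs (1,0) (0,1)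
  have hI2 := hecs (0,1) (1,0)
  have hI1a := congrArg Prod.fst hI1
  have hI1b := congrArg Prod.snd hI1
  have hI2a := congrArg Prod.fst hI2
  have hI2b := congrArg Prod.snd hI2
  simp only [scMul] at hI1a hI1b hI2a hI2b
  have ha2K : a2 * (b2 * (a2 + a3) - a1 * a3) = 0 := by linear_combination -hI1a
  have hb2K : b2 * (b2 * (a2 + a3) - a1 * a3) = 0 := by linear_combination -hI1b
  have ha3K : a3 * (b2 * (a2 + a3) - a1 * a3) = 0 := by linear_combination hI2a
  have ha1K : a1 * (b2 * (a2 + a3) - a1 * a3) = 0 := by linear_combination hI2b - hI1b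
  have hnzAll : ¬(a1 = 0 ∧ a2 = 0 ∧ a3 = 0 ∧ b2 = 0) := by
    rintro ⟨rfl, rfl, rfl, rfl⟩
    apply hnz
    intro x y
    rw [hrep]
    simp only [scMul]
    norm_num [Prod.ext_iff]
  have hK : b2 * (a2 + a3) = a1 * a3 := by
    by_contra hne
    have hKne : b2 * (a2 + a3) - a1 * a3 ≠ 0 := sub_ne_zero.mpr hne
    exact hnzAll ⟨(mul_eq_zero.mp ha1K).resolve_right hKne,
      (mul_eq_zero.mp ha2K).resolve_right hKne,
      (mul_eq_zero.mp ha3K).resolve_right hKne,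
      (mul_eq_zero.mp hb2K).resolve_right hKne⟩
  -- existence
  have hexists : ∃ i, AlgIso m (ecCurledFamily i) := by
    by_cases hphi : a1 = 0 ∧ a2 + a3 = 0
    · obtain ⟨h10, hs0⟩ := hphi
      subst h10
      have ha3 : a3 = -a2 := by linear_combination hs0
      subst ha3
      refine ⟨some 0, ?_⟩
      by_cases hb2 : b2 = 0
      · subst hb2
        have ha2 : a2 ≠ 0 := by
          intro h
          exact hnzAll ⟨rfl, h, by rw [h, neg_zero], rfl⟩
        obtain ⟨g, hg⟩ := key_iso h2F 0 a2 (-a2) 0 0 0 0 (2*(0:F)-1) (1-(0:F)) 0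
          0 a2 (1/a2) 0
          (by ring) (by ring)
          (by
            intro h
            apply ha2
            have h' : a2 * (1/a2) = 0 := by linear_combination -h
            rcases mul_eq_zero.mp h' with h'' | h''
            · exact h''
            · exact absurd (one_div_ne_zero ha2) (fun _ => (one_div_ne_zero ha2) h''))
          (by ring) (by ring) (by ring)
          (by field_simp <;> ring)
        exact ⟨g, fun x y => by rw [hrep x y]; exact hg x y⟩
      · obtain ⟨g, hg⟩ := key_iso h2F 0 a2 (-a2) b2 0 0 0 (2*(0:F)-1) (1-(0:F)) 0
          (-b2) a2 0 (1/b2)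
          (by ring) (by ring)
          (by
            intro h
            apply hb2
            have h' : -(b2 * (1/b2)) = 0 := by linear_combination h
            have h'' : b2 * (1/b2) = 0 := by linear_combination -h'
            rcases mul_eq_zero.mp h'' with h3' | h3'
            · exact h3'
            · exact absurd h3' (one_div_ne_zero hb2))
          (by ring) (by ring) (by ring)
          (by field_simp <;> ring)
        exact ⟨g, fun x y => by rw [hrep x y]; exact hg x y⟩
    · by_cases hw0 : a2 = a3 ∧ 2 * b2 = a1
      · obtain ⟨hww1, hww2⟩ := hw0
        subst hww1
        have hww2' : a1 = 2 * b2 := hww2.symm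
        subst hww2'
        refine ⟨some (2/3), ?_⟩
        by_cases hb20 : b2 = 0
        · subst hb20
          have ha2 : a2 ≠ 0 := by
            intro h
            exact hphi ⟨by ring, by rw [h]; ring⟩
          obtain ⟨g, hg⟩ := key_iso h2F (2*0) a2 a2 0 (2/3) 0 0 (2*(2/3:F)-1) (1-(2/3:F)) 0
            0 (3*a2) 1 0
            (by ring) (by ring)
            (by
              intro h
              apply ha2
              have h' : 3 * a2 = 0 := by linear_combination -h
              exact (mul_eq_zero.mp h').resolve_left h3F)
            (by ring) (by field_simp <;> ring) (by ring)
            (by field_simp <;> ring)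
          exact ⟨g, fun x y => by rw [hrep x y]; exact hg x y⟩
        · obtain ⟨g, hg⟩ := key_iso h2F (2*b2) a2 a2 b2 (2/3) 0 0 (2*(2/3:F)-1) (1-(2/3:F)) 0
            (3*b2) (3*a2) 0 1
            (by ring) (by ring)
            (by
              intro h
              apply hb20
              have h' : 3 * b2 = 0 := by linear_combination h
              exact (mul_eq_zero.mp h').resolve_left h3F)
            (by field_simp <;> ring) (by field_simp <;> ring) (by ring)
            (by field_simp <;> ring)
          exact ⟨g, fun x y => by rw [hrep x y]; exact hg x y⟩
      · by_cases ha1 : a1 = 0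
        · subst ha1
          have hs : a2 + a3 ≠ 0 := fun h => hphi ⟨rfl, h⟩
          have hb20 : b2 = 0 := by
            have h' : b2 * (a2 + a3) = 0 := by linear_combination hK
            exact (mul_eq_zero.mp h').resolve_right hs
          subst hb20
          by_cases hc2 : 2 * a2 + a3 = 0
          · have ha3' : a3 = -(2*a2) := by linear_combination hc2
            subst ha3'
            have ha2 : a2 ≠ 0 := by
              intro h
              apply hs
              rw [h]; ring
            refine ⟨none, ?_⟩
            obtain ⟨g, hg⟩ := key_iso h2F 0 a2 (-(2*a2)) 0 (1/3) 0 0 (2/3) (-(1/3)) 0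
              0 (-(3*a2)) 1 0
              (by ring) (by ring)
              (by
                intro h
                apply ha2
                have h' : 3 * a2 = 0 := by linear_combination h
                exact (mul_eq_zero.mp h').resolve_left h3F)
              (by ring) (by field_simp <;> ring) (by ring)
              (by field_simp <;> ring)
            exact ⟨g, fun x y => by rw [hrep x y]; exact hg x y⟩
          · refine ⟨some ((a2+a3)/(2*a2+a3)), ?_⟩
            obtain ⟨g, hg⟩ := key_iso h2F 0 a2 a3 0 ((a2+a3)/(2*a2+a3)) 0 0
              (2*((a2+a3)/(2*a2+a3))-1) (1-((a2+a3)/(2*a2+a3))) 0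
              0 (2*a2+a3) 1 0
              (by ring) (by ring)
              (by
                intro h
                apply hc2
                linear_combination -h)
              (by ring) (by have : a2 * 2 + a3 ≠ 0 := (by rwa [mul_comm]); field_simp <;> ring) (by ring)
              (by have : a2 * 2 + a3 ≠ 0 := (by rwa [mul_comm]); field_simp <;> ring)
            exact ⟨g, fun x y => by rw [hrep x y]; exact hg x y⟩
        · by_cases hb2a : b2 = 2 * a1
          · subst hb2a
            have h5 : a1 * (2*a2 + a3) = 0 := by linear_combination hK
            have h6 : a3 = -(2*a2) := by
              have := (mul_eq_zero.mp h5).resolve_left ha1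
              linear_combination this
            subst h6
            refine ⟨none, ?_⟩
            obtain ⟨g, hg⟩ := key_iso h2F a1 a2 (-(2*a2)) (2*a1) (1/3) 0 0 (2/3) (-(1/3)) 0
              (3*a1) (-(3*a2)) 0 1
              (by ring) (by ring)
              (by
                intro h
                apply ha1
                have h' : 3 * a1 = 0 := by linear_combination h
                exact (mul_eq_zero.mp h').resolve_left h3F)
              (by field_simp <;> ring) (by field_simp <;> ring) (by ring)
              (by field_simp <;> ring)
            exact ⟨g, fun x y => by rw [hrep x y]; exact hg x y⟩
          · have hd : 2 * a1 - b2 ≠ 0 := by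
              intro h
              apply hb2a
              linear_combination -h
            refine ⟨some (a1/(2*a1-b2)), ?_⟩
            obtain ⟨g, hg⟩ := key_iso h2F a1 a2 a3 b2 (a1/(2*a1-b2)) 0 0
              (2*(a1/(2*a1-b2))-1) (1-(a1/(2*a1-b2))) 0
              (2*a1-b2) ((a2+a3)*(2*a1-b2)/a1) 0 1
              (by ring) (by ring)
              (by
                intro h
                apply hd
                linear_combination h)
              (by have : a1 * 2 - b2 ≠ 0 := (by rwa [mul_comm]); field_simp <;> ring) (by have : a1 * 2 - b2 ≠ 0 := (by rwa [mul_comm]); field_simp <;> ring)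
              (by have : a1 * 2 - b2 ≠ 0 := (by rwa [mul_comm]); field_simp; linear_combination 2 * hK)
              (by have : a1 * 2 - b2 ≠ 0 := (by rwa [mul_comm]); field_simp <;> ring)
            exact ⟨g, fun x y => by rw [hrep x y]; exact hg x y⟩
  obtain ⟨i0, hi0⟩ := hexists
  exact ⟨⟨i0, hi0, fun j hj => famInj h3F (algIso_trans (algIso_symm hj) hi0)⟩,
    fun i j hij hiso => hij (famInj h3F hiso)⟩
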